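/- arXiv:0911.1709 — 4 statements merged into one kernel-verified Lean document; each statement's English description precedes it below -/
import Mathlib

section
/- Let $(V_i)_{i \geq 1}$ be a sequence of submodules of a module satisfying: for all integers $0 < r < s$ and all $t \geq 0$, $V_{s+t(s-r)} \subseteq V_r + V_s$. Then for any strictly increasing sequence $I = (i_j)_{j \geq 1}$ of positive integers, there exists a finite set $J$ of indices with $|J| \leq i_2 - i_1 + 1$, containing $1$ and $2$, such that $\sum_{j=1}^\infty V_{i_j} = \sum_{j \in J} V_{i_j}$. -/
/-- Key arithmetic covering lemma, proved by strong induction on `e` (Euclid's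
algorithm).  If `P` is closed under the rule `P r → P s → P (s + t*(s-r))`,
holds on the lattice `{A + e*t}` and at a point `X = A + β + e*mm` with
`0 < β < e`, then `P` holds at `X + k` for every `k ≥ e` divisible by
`gcd e β`. -/
lemma basic_sequence_arith (P : ℕ → Prop)
    (hP : ∀ r s t : ℕ, 0 < r → r < s → P r → P s → P (s + t * (s - r)))
    (e : ℕ) :
    ∀ β A mm X, 0 < A → 0 < β → β < e → X = A + β + e * mm →
      (∀ t, P (A + e * t)) → P X →
      ∀ k, e ≤ k → Nat.gcd e β ∣ k → P (X + k) := by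
  induction e using Nat.strong_induction_on with
  | _ e IH =>
    intro β A mm X hA hβ hβe hX hlat hPX k hk hdvd
    have hL : ∀ u, P (X + β * u) := by
      intro u
      have h0 : 0 < A + e * mm := by omega
      have h1 : A + e * mm < X := by omega
      have h2 := hP (A + e * mm) X u h0 h1 (hlat mm) hPX
      have h3 : X - (A + e * mm) = β := by omega
      rw [h3] at h2
      have h4 : u * β = β * u := by ring
      rw [h4] at h2
      exact h2
    by_cases hdd : β ∣ e
    · have hβk : β ∣ k := dvd_trans (Nat.dvd_gcd hdd dvd_rfl) hdvd
      obtain ⟨u, rfl⟩ := hβk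
      exact hL u
    · have hmod : 0 < e % β :=
        Nat.pos_of_ne_zero fun hh => hdd (Nat.dvd_of_mod_eq_zero hh)
      have hmodlt : e % β < β := Nat.mod_lt _ hβ
      obtain ⟨q, hq⟩ : ∃ q, e / β = q + 1 := by
        have : 1 ≤ e / β := (Nat.one_le_div_iff hβ).mpr hβe.le
        exact ⟨e / β - 1, by omega⟩
      have hdm := Nat.div_add_mod e β
      rw [hq] at hdm
      have hql : β * (q + 1) = β * q + β := by ring
      have hX' : X + (e - β) = X + (e % β) + β * q := by omega
      have hPX' : P (X + (e - β)) := by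
        have h5 := hlat (mm + 1)
        have hexp : e * (mm + 1) = e * mm + e := by ring
        have h6 : A + e * (mm + 1) = X + (e - β) := by omega
        rwa [h6] at h5
      have hgcd : Nat.gcd β (e % β) = Nat.gcd e β := by
        rw [Nat.gcd_comm e β, Nat.gcd_rec β e, Nat.gcd_comm]
      have hd2 : Nat.gcd β (e % β) ∣ k - (e - β) := by
        rw [hgcd]
        exact Nat.dvd_sub hdvd
          (Nat.dvd_sub (Nat.gcd_dvd_left e β) (Nat.gcd_dvd_right e β))
      have hrec := IH β hβe (e % β) X q (X + (e - β)) (by omega) hmod hmodlt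
        hX' hL hPX' (k - (e - β)) (by omega) hd2
      have h7 : X + (e - β) + (k - (e - β)) = X + k := by omega
      rwa [h7] at hrec

/-- If a sequence of submodules `V_i` satisfies `V_{s+t(s-r)} ⊆ V_r + V_s` for all
`0 < r < s` and `t ≥ 0`, then for any strictly increasing sequence `i_1 < i_2 < ⋯` of
positive integers (here `i : ℕ → ℕ` with `i j` playing the role of `i_{j+1}`), there is
a finite set `J` of indices, of size at most `i_2 - i_1 + 1` and containing the first
two indices, with `∑_{j} V_{i_j} = ∑_{j ∈ J} V_{i_j}`. -/
theorem basic_sequence {R M : Type*} [Ring R] [AddCommGroup M] [Module R M]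
    (V : ℕ → Submodule R M)
    (h : ∀ r s t : ℕ, 0 < r → r < s → V (s + t * (s - r)) ≤ V r ⊔ V s)
    (i : ℕ → ℕ) (hmono : StrictMono i) (hpos : 1 ≤ i 0) :
    ∃ J : Finset ℕ, J.card ≤ i 1 - i 0 + 1 ∧ 0 ∈ J ∧ 1 ∈ J ∧
      (⨆ j : ℕ, V (i j)) = ⨆ j ∈ J, V (i j) := by
  classical
  have h01 : i 0 < i 1 := hmono Nat.zero_lt_one
  set d := i 1 - i 0 with hdef
  have hd : 0 < d := by omega
  set rep : ℕ → ℕ := fun c => sInf {j | i j % d = c} with hrep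
  set J : Finset ℕ := insert 1 ((Finset.range d).image rep) with hJ
  have h0J : 0 ∈ J := by
    have hmem0 : (0 : ℕ) ∈ {j | i j % d = i 0 % d} := rfl
    have hrep0 : rep (i 0 % d) = 0 := Nat.sInf_eq_zero.mpr (Or.inl hmem0)
    exact Finset.mem_insert_of_mem
      (Finset.mem_image.mpr ⟨i 0 % d, Finset.mem_range.mpr (Nat.mod_lt _ hd), hrep0⟩)
  have h1J : 1 ∈ J := Finset.mem_insert_self _ _
  have hcard : J.card ≤ d + 1 := by
    rw [hJ]
    have h1 := Finset.card_insert_le (1 : ℕ) ((Finset.range d).image rep)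
    have h2 := Finset.card_image_le (s := Finset.range d) (f := rep)
    have h3 : (Finset.range d).card = d := Finset.card_range d
    omega
  set S := ⨆ j ∈ J, V (i j) with hS
  have hbase : ∀ j ∈ J, V (i j) ≤ S := fun j hj =>
    le_iSup₂ (f := fun j (_ : j ∈ J) => V (i j)) j hj
  have hP : ∀ r s t : ℕ, 0 < r → r < s → V r ≤ S → V s ≤ S →
      V (s + t * (s - r)) ≤ S := fun r s t hr hrs h1 h2 =>
    le_trans (h r s t hr hrs) (sup_le h1 h2)
  have hpos' : 0 < i 0 := hpos
  have hlat : ∀ t, V (i 0 + d * t) ≤ S := by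
    intro t
    cases t with
    | zero => simpa using hbase 0 h0J
    | succ u =>
      have h2 := hP (i 0) (i 1) u hpos' h01 (hbase 0 h0J) (hbase 1 h1J)
      have h4 : u * (i 1 - i 0) = u * d := by rw [← hdef]
      have h5 : u * d = d * u := by ring
      have h6 : d * (u + 1) = d * u + d := by ring
      have h3 : i 1 + u * (i 1 - i 0) = i 0 + d * (u + 1) := by omega
      rwa [h3] at h2
  have hcover : ∀ m, V (i m) ≤ S := by
    intro m
    have hcd : i m % d < d := Nat.mod_lt _ hd
    have hmem : m ∈ {j | i j % d = i m % d} := rfl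
    set j0 := rep (i m % d) with hj0def
    have hj0c : i j0 % d = i m % d := Nat.sInf_mem ⟨m, hmem⟩
    have hj0m : j0 ≤ m := Nat.sInf_le hmem
    have hj0J : j0 ∈ J := Finset.mem_insert_of_mem
      (Finset.mem_image.mpr ⟨i m % d, Finset.mem_range.mpr hcd, rfl⟩)
    have hPX : V (i j0) ≤ S := hbase _ hj0J
    have hXm : i j0 ≤ i m := hmono.monotone hj0m
    have hdvd : d ∣ i m - i j0 := (Nat.modEq_iff_dvd' hXm).mp hj0c
    rcases Nat.eq_or_lt_of_le hXm with heq | hlt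
    · rw [← heq]; exact hPX
    · by_cases hc0 : i m % d = i 0 % d
      · have h0m : i 0 ≤ i m := hmono.monotone (Nat.zero_le m)
        have hdd : d ∣ i m - i 0 := (Nat.modEq_iff_dvd' h0m).mp hc0.symm
        obtain ⟨t, ht⟩ := hdd
        have h8 := hlat t
        have h9 : i 0 + d * t = i m := by omega
        rwa [h9] at h8
      · have haj : i 0 ≤ i j0 := hmono.monotone (Nat.zero_le j0)
        have hβlt : (i j0 - i 0) % d < d := Nat.mod_lt _ hd
        have hβpos : 0 < (i j0 - i 0) % d := by
          rcases Nat.eq_zero_or_pos ((i j0 - i 0) % d) with h0 | hp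
          · exfalso
            have hdd : d ∣ i j0 - i 0 := Nat.dvd_of_mod_eq_zero h0
            have h10 : i 0 % d = i j0 % d := (Nat.modEq_iff_dvd' haj).mpr hdd
            exact hc0 (by rw [← hj0c, ← h10])
          · exact hp
        have hdm := Nat.div_add_mod (i j0 - i 0) d
        have hXeq : i j0 = i 0 + (i j0 - i 0) % d + d * ((i j0 - i 0) / d) := by
          omega
        have hk : d ≤ i m - i j0 := Nat.le_of_dvd (by omega) hdvd
        have hG : Nat.gcd d ((i j0 - i 0) % d) ∣ i m - i j0 :=
          dvd_trans (Nat.gcd_dvd_left _ _) hdvd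
        have hres := basic_sequence_arith (fun n => V n ≤ S) hP d
          ((i j0 - i 0) % d) (i 0) ((i j0 - i 0) / d) (i j0) hpos' hβpos hβlt
          hXeq hlat hPX (i m - i j0) hk hG
        have h11 : i j0 + (i m - i j0) = i m := by omega
        rwa [h11] at hres
  exact ⟨J, hcard, h0J, h1J,
    le_antisymm (iSup_le hcover) (iSup₂_le fun j _ => le_iSup (fun j => V (i j)) j)⟩
end

section
/- Let $d$ be a positive integer and let $S_1^{(d)}$ be the $T$-space of the free associative algebra $k_0\langle X\rangle$ generated by $S^{(d)}(x_1,\ldots,x_d)$. Then modulo $S_1^{(d)}$, $S^{(d+1)}(x_1,\ldots,x_{d+1}) \equiv S^{(d)}(x_1,\ldots,x_d)\, x_{d+1} \equiv x_{d+1}\, S^{(d)}(x_1,\ldots,x_d)$; i.e., both differences $S^{(d+1)}(x_1,\ldots,x_{d+1}) - S^{(d)}(x_1,\ldots,x_d)x_{d+1}$ and $S^{(d+1)}(x_1,\ldots,x_{d+1}) - x_{d+1}S^{(d)}(x_1,\ldots,x_d)$ lie in $S_1^{(d)}$. -/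
open scoped BigOperators

/-- The free non-unital associative algebra over `k` on countably many variables,
realized as the semigroup algebra of the free semigroup on `ℕ`. -/
abbrev FA (k : Type*) [Field k] := MonoidAlgebra k (FreeSemigroup ℕ)

/-- The generator (variable) `x_i`. -/
noncomputable def Xg (k : Type*) [Field k] (i : ℕ) : FA k :=
  MonoidAlgebra.single (FreeSemigroup.of i) 1

/-- Product of a (nonempty) list in a non-unital semiring; `0` on the empty list. -/
def lprod {A : Type*} [NonUnitalSemiring A] : List A → A
  | [] => 0
  | [a] => a
  | a :: b :: l => a * lprod (b :: l)

/-- `n`-th power in a non-unital semiring (zero for `n = 0`). -/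
def npow' {A : Type*} [NonUnitalSemiring A] (a : A) (n : ℕ) : A :=
  lprod (List.replicate n a)

/-- The full multilinear symmetrization `S^{(d)}(y_1,…,y_d) = ∑_{σ ∈ Σ_d} y_{σ(1)} ⋯ y_{σ(d)}`. -/
def Ssym {A : Type*} [NonUnitalSemiring A] (d : ℕ) (y : Fin d → A) : A :=
  ∑ σ : Equiv.Perm (Fin d), lprod (List.ofFn (fun i => y (σ i)))

/-- A T-space: a subspace closed under all substitution endomorphisms
(non-unital algebra endomorphisms). -/
def IsTSpace (k : Type*) [Field k] (V : Submodule k (FA k)) : Prop :=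
  ∀ (φ : FA k →ₙₐ[k] FA k), ∀ v ∈ V, φ v ∈ V

/-- The T-space generated by a set `S`: the span of all substitution instances
of elements of `S`. -/
noncomputable def TSpan (k : Type*) [Field k] (S : Set (FA k)) : Submodule k (FA k) :=
  Submodule.span k {a | ∃ (φ : FA k →ₙₐ[k] FA k) (s : FA k), s ∈ S ∧ a = φ s}

/-- The set of products `u * v` with `u ∈ U`, `v ∈ V`. -/
def mulSet {k : Type*} [Field k] (U V : Submodule k (FA k)) : Set (FA k) :=
  {a | ∃ u ∈ U, ∃ v ∈ V, a = u * v}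

/-- The T-spaces `S_n^{(d)}`: `S_1^{(d)}` is generated by `S^{(d)}(x_1,…,x_d)` and
`S_{n+1}^{(d)} = (S_n^{(d)} S_1^{(d)})^S`. -/
noncomputable def Sn (k : Type*) [Field k] (d : ℕ) : ℕ → Submodule k (FA k)
  | 0 => ⊥
  | 1 => TSpan k {Ssym d (fun i => Xg k i)}
  | (n+2) => TSpan k (mulSet (Sn k d (n+1)) (Sn k d 1))

/-- The T-spaces `H_n`: `H_1` is generated by `x_1^p` and `H_{n+1} = (H_n H_1)^S`. -/
noncomputable def Hn (k : Type*) [Field k] (p : ℕ) : ℕ → Submodule k (FA k)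
  | 0 => ⊥
  | 1 => TSpan k {npow' (Xg k 0) p}
  | (n+2) => TSpan k (mulSet (Hn k p (n+1)) (Hn k p 1))

/-- The word `x_1^p x_2^p ⋯ x_n^p`. -/
noncomputable def hword (k : Type*) [Field k] (p n : ℕ) : FA k :=
  lprod ((List.range n).map (fun t => npow' (Xg k t) p))



section
variable {A : Type*} [NonUnitalSemiring A]

lemma lprod_cons (a : A) {l : List A} (h : l ≠ []) : lprod (a :: l) = a * lprod l := by
  cases l with
  | nil => exact absurd rfl h
  | cons b t => rfl

lemma lprod_append {l₁ l₂ : List A} (h₁ : l₁ ≠ []) (h₂ : l₂ ≠ []) :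
    lprod (l₁ ++ l₂) = lprod l₁ * lprod l₂ := by
  induction l₁ with
  | nil => exact absurd rfl h₁
  | cons a t ih =>
    cases t with
    | nil => exact lprod_cons a h₂
    | cons b u =>
      rw [List.cons_append, lprod_cons a (by simp), ih (by simp),
        lprod_cons a (by simp), mul_assoc]

lemma lprod_insertIdx_right (a : A) : ∀ (l : List A) (m : ℕ) (h : m < l.length),
    lprod (l.insertIdx (m+1) a) = lprod (l.set m (l[m] * a))
  | [], m, h => by simp at h
  | c :: t, 0, h => by
    rw [List.insertIdx_succ_cons, List.insertIdx_zero]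
    cases t with
    | nil => show c * a = c * a; rfl
    | cons b u =>
      show c * (a * lprod (b :: u)) = (c * a) * lprod (b :: u)
      rw [mul_assoc]
  | c :: t, m+1, h => by
    have ht : m < t.length := by simpa using h
    have hne : t ≠ [] := List.ne_nil_of_length_pos (Nat.lt_of_le_of_lt (Nat.zero_le m) ht)
    have hne2 : t.insertIdx (m+1) a ≠ [] := by
      cases t with
      | nil => exact absurd rfl hne
      | cons b u => rw [List.insertIdx_succ_cons]; simp
    have hne3 : t.set m (t[m] * a) ≠ [] := by
      simpa using hne
    rw [List.insertIdx_succ_cons, lprod_cons c hne2, lprod_insertIdx_right a t m ht]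
    show _ = lprod (c :: t.set m (t[m] * a))
    rw [lprod_cons c hne3]

lemma lprod_insertIdx_left (a : A) : ∀ (l : List A) (m : ℕ) (h : m < l.length),
    lprod (l.insertIdx m a) = lprod (l.set m (a * l[m]))
  | [], m, h => by simp at h
  | c :: t, 0, h => by
    rw [List.insertIdx_zero]
    cases t with
    | nil => show a * c = a * c; rfl
    | cons b u =>
      show a * (c * lprod (b :: u)) = (a * c) * lprod (b :: u)
      rw [mul_assoc]
  | c :: t, m+1, h => by
    have ht : m < t.length := by simpa using h
    have hne : t ≠ [] := List.ne_nil_of_length_pos (Nat.lt_of_le_of_lt (Nat.zero_le m) ht)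
    have hne2 : t.insertIdx m a ≠ [] := by
      have : (t.insertIdx m a).length = t.length + 1 := List.length_insertIdx_of_le_length ht.le a
      exact List.ne_nil_of_length_pos (by omega)
    have hne3 : t.set m (a * t[m]) ≠ [] := by simpa using hne
    rw [List.insertIdx_succ_cons, lprod_cons c hne2, lprod_insertIdx_left a t m ht]
    show _ = lprod (c :: t.set m (a * t[m]))
    rw [lprod_cons c hne3]

end

lemma ofFn_update' {α : Type*} {n : ℕ} (f : Fin n → α) (i : Fin n) (v : α) :
    List.ofFn (Function.update f i v) = (List.ofFn f).set i v := by
  apply List.ext_getElem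
  · simp [List.length_set]
  · intro k h1 h2
    simp only [List.getElem_ofFn, List.getElem_set, Function.update_apply]
    by_cases hk : (k : ℕ) = (i : ℕ)
    · simp [hk, Fin.ext_iff]
    · simp [hk, Ne.symm hk, Fin.ext_iff]

lemma ofFn_insertNth {α : Type*} : ∀ {n : ℕ} (j : Fin (n+1)) (a : α) (g : Fin n → α),
    List.ofFn (Fin.insertNth (α := fun _ => α) j a g) = (List.ofFn g).insertIdx j a := by
  intro n
  induction n with
  | zero =>
    intro j a g
    have hj : j = 0 := by ext; omega
    subst hj
    simp [Fin.insertNth_zero']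
  | succ m ih =>
    intro j a g
    cases j using Fin.cases with
    | zero => simp [Fin.insertNth_zero', List.ofFn_succ, Fin.cons_zero, Fin.cons_succ]
    | succ j' =>
      rw [List.ofFn_succ]
      have h0 : Fin.insertNth (α := fun _ => α) j'.succ a g 0 = g 0 := by
        have h : (0 : Fin (m+2)) = j'.succ.succAbove 0 :=
          (Fin.succAbove_ne_zero_zero (Fin.succ_ne_zero j')).symm
        rw [h, Fin.insertNth_apply_succAbove]
      have htail : (fun i : Fin (m+1) => Fin.insertNth (α := fun _ => α) j'.succ a g i.succ)
          = Fin.insertNth (α := fun _ => α) j' a (fun i => g i.succ) := by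
      -- use insertNth_eq_iff
        symm
        rw [Fin.insertNth_eq_iff]
        constructor
        · simp
        · funext t
          show g t.succ = Fin.insertNth (α := fun _ => α) j'.succ a g (j'.succAbove t).succ
          rw [← Fin.succ_succAbove_succ, Fin.insertNth_apply_succAbove]
      rw [h0, htail, ih, List.ofFn_succ (f := g), Fin.val_succ, List.insertIdx_succ_cons]

noncomputable def insPerm {d : ℕ} (j : Fin (d+1)) (τ : Equiv.Perm (Fin d)) :
    Equiv.Perm (Fin (d+1)) :=
  (finSuccEquiv' j).trans ((Equiv.optionCongr τ).trans (finSuccEquiv' (Fin.last d)).symm)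

@[simp] lemma insPerm_self {d : ℕ} (j : Fin (d+1)) (τ : Equiv.Perm (Fin d)) :
    insPerm j τ j = Fin.last d := by
  simp [insPerm]

@[simp] lemma insPerm_succAbove {d : ℕ} (j : Fin (d+1)) (τ : Equiv.Perm (Fin d)) (i : Fin d) :
    insPerm j τ (j.succAbove i) = (τ i).castSucc := by
  simp [insPerm, Fin.succAbove_last]

lemma insPerm_bijective (d : ℕ) :
    Function.Bijective (fun p : Fin (d+1) × Equiv.Perm (Fin d) => insPerm p.1 p.2) := by
  rw [Fintype.bijective_iff_injective_and_card]
  constructor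
  · rintro ⟨j, τ⟩ ⟨j', τ'⟩ h
    simp only at h
    have hj : j = j' := by
      have h1 : insPerm j' τ' j = insPerm j' τ' j' := by
        rw [insPerm_self, ← h, insPerm_self]
      exact (insPerm j' τ').injective h1
    subst hj
    have hτ : τ = τ' := by
      ext i
      have h2 : insPerm j τ (j.succAbove i) = insPerm j τ' (j.succAbove i) := by rw [h]
      rw [insPerm_succAbove, insPerm_succAbove] at h2
      exact Fin.ext_iff.mp (Fin.castSucc_injective _ h2) ▸ rfl
    rw [hτ]
  · simp [Fintype.card_perm, Nat.factorial_succ]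

lemma word_eq {A : Type*} {d : ℕ} (x : Fin (d+1) → A) (j : Fin (d+1)) (τ : Equiv.Perm (Fin d)) :
    (fun i => x (insPerm j τ i))
      = Fin.insertNth (α := fun _ => A) j (x (Fin.last d)) (fun i => x ((τ i).castSucc)) := by
  symm
  rw [Fin.insertNth_eq_iff]
  refine ⟨by simp, ?_⟩
  funext t
  show x ((τ t).castSucc) = x (insPerm j τ (j.succAbove t))
  rw [insPerm_succAbove]

lemma Ssym_split {A : Type*} [NonUnitalSemiring A] (d : ℕ) (x : Fin (d+1) → A) :
    Ssym (d+1) x = ∑ j : Fin (d+1), ∑ τ : Equiv.Perm (Fin d),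
      lprod ((List.ofFn (fun i => x ((τ i).castSucc))).insertIdx j (x (Fin.last d))) := by
  have := Fintype.sum_bijective _ (insPerm_bijective d)
      (fun p : Fin (d+1) × Equiv.Perm (Fin d) =>
        lprod (List.ofFn (fun i => x (insPerm p.1 p.2 i))))
      (fun σ : Equiv.Perm (Fin (d+1)) => lprod (List.ofFn (fun i => x (σ i))))
      (fun p => rfl)
  unfold Ssym
  rw [← this, Fintype.sum_prod_type]
  refine Finset.sum_congr rfl fun j _ => Finset.sum_congr rfl fun τ _ => ?_
  rw [word_eq x j τ, ofFn_insertNth]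

lemma Ssym_succ_zero {A : Type*} [NonUnitalSemiring A] (d : ℕ) (hd : 1 ≤ d) (x : Fin (d+1) → A) :
    Ssym (d+1) x = x (Fin.last d) * Ssym d (fun t : Fin d => x t.castSucc)
      + ∑ s : Fin d, Ssym d (Function.update (fun t : Fin d => x t.castSucc) s
          (x s.castSucc * x (Fin.last d))) := by
  classical
  set a := x (Fin.last d) with ha
  set g : Fin d → A := fun t => x t.castSucc with hg
  have hlen : ∀ τ : Equiv.Perm (Fin d),
      (List.ofFn (fun i => x ((τ i).castSucc))).length = d := fun τ => List.length_ofFn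
  have hofFn : ∀ τ : Equiv.Perm (Fin d), (List.ofFn (fun i => x ((τ i).castSucc))) ≠ [] := by
    intro τ; apply List.ne_nil_of_length_pos; rw [hlen]; omega
  rw [Ssym_split, Fin.sum_univ_succ]
  congr 1
  · simp only [Ssym]
    rw [Finset.mul_sum]
    refine Finset.sum_congr rfl fun τ _ => ?_
    show lprod ((List.ofFn fun i => x ((τ i).castSucc)).insertIdx 0 a) = a * _
    rw [List.insertIdx_zero, lprod_cons _ (hofFn τ)]
  · have key : ∀ (t : Fin d) (τ : Equiv.Perm (Fin d)),
        lprod ((List.ofFn (fun i => x ((τ i).castSucc))).insertIdx ((t.succ : Fin (d+1)) : ℕ) a)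
          = lprod (List.ofFn (fun i =>
              (Function.update g (τ t) (g (τ t) * a)) (τ i))) := by
      intro t τ
      have h1 : ((t.succ : Fin (d+1)) : ℕ) = (t : ℕ) + 1 := rfl
      have htl : (t : ℕ) < (List.ofFn (fun i => x ((τ i).castSucc))).length := by
        rw [hlen]; exact t.isLt
      rw [h1, lprod_insertIdx_right a _ _ htl]
      have hget : (List.ofFn (fun i => x ((τ i).castSucc)))[(t:ℕ)] = g (τ t) := by
        simp [hg]
      rw [hget, ← ofFn_update']
      have h2 := Function.update_comp_equiv g (τ : Fin d ≃ Fin d) (τ t) (g (τ t) * a)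
      rw [Equiv.symm_apply_apply] at h2
      have h3 : Function.update (fun i => x ((τ i).castSucc)) t (g (τ t) * a)
          = fun i => (Function.update g (τ t) (g (τ t) * a)) (τ i) := h2.symm
      rw [h3]
    calc ∑ t : Fin d, ∑ τ : Equiv.Perm (Fin d),
          lprod ((List.ofFn (fun i => x ((τ i).castSucc))).insertIdx ((t.succ : Fin (d+1)) : ℕ) a)
        = ∑ t : Fin d, ∑ τ : Equiv.Perm (Fin d),
            lprod (List.ofFn (fun i => (Function.update g (τ t) (g (τ t) * a)) (τ i))) := by
          exact Finset.sum_congr rfl fun t _ => Finset.sum_congr rfl fun τ _ => key t τ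
      _ = ∑ τ : Equiv.Perm (Fin d), ∑ t : Fin d,
            lprod (List.ofFn (fun i => (Function.update g (τ t) (g (τ t) * a)) (τ i))) :=
          Finset.sum_comm
      _ = ∑ τ : Equiv.Perm (Fin d), ∑ s : Fin d,
            lprod (List.ofFn (fun i => (Function.update g s (g s * a)) (τ i))) :=
          Finset.sum_congr rfl fun τ _ =>
            Equiv.sum_comp τ (fun s => lprod (List.ofFn (fun i =>
              (Function.update g s (g s * a)) (τ i))))
      _ = ∑ s : Fin d, ∑ τ : Equiv.Perm (Fin d),
            lprod (List.ofFn (fun i => (Function.update g s (g s * a)) (τ i))) :=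
          Finset.sum_comm
      _ = ∑ s : Fin d, Ssym d (Function.update g s (g s * a)) := rfl

lemma Ssym_succ_last {A : Type*} [NonUnitalSemiring A] (d : ℕ) (hd : 1 ≤ d) (x : Fin (d+1) → A) :
    Ssym (d+1) x = Ssym d (fun t : Fin d => x t.castSucc) * x (Fin.last d)
      + ∑ s : Fin d, Ssym d (Function.update (fun t : Fin d => x t.castSucc) s
          (x (Fin.last d) * x s.castSucc)) := by
  classical
  set a := x (Fin.last d) with ha
  set g : Fin d → A := fun t => x t.castSucc with hg
  have hlen : ∀ τ : Equiv.Perm (Fin d),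
      (List.ofFn (fun i => x ((τ i).castSucc))).length = d := fun τ => List.length_ofFn
  have hofFn : ∀ τ : Equiv.Perm (Fin d), (List.ofFn (fun i => x ((τ i).castSucc))) ≠ [] := by
    intro τ; apply List.ne_nil_of_length_pos; rw [hlen]; omega
  rw [Ssym_split, Fin.sum_univ_castSucc, add_comm]
  congr 1
  · simp only [Ssym]
    rw [Finset.sum_mul]
    refine Finset.sum_congr rfl fun τ _ => ?_
    have hcast : ((Fin.last d : Fin (d+1)) : ℕ)
        = (List.ofFn (fun i => x ((τ i).castSucc))).length := by
      rw [hlen]; rfl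
    rw [hcast, List.insertIdx_length_self, lprod_append (hofFn τ) (by simp)]
    rfl
  · have key : ∀ (t : Fin d) (τ : Equiv.Perm (Fin d)),
        lprod ((List.ofFn (fun i => x ((τ i).castSucc))).insertIdx ((t.castSucc : Fin (d+1)) : ℕ) a)
          = lprod (List.ofFn (fun i =>
              (Function.update g (τ t) (a * g (τ t))) (τ i))) := by
      intro t τ
      have h1 : ((t.castSucc : Fin (d+1)) : ℕ) = (t : ℕ) := rfl
      have htl : (t : ℕ) < (List.ofFn (fun i => x ((τ i).castSucc))).length := by
        rw [hlen]; exact t.isLt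
      rw [h1, lprod_insertIdx_left a _ _ htl]
      have hget : (List.ofFn (fun i => x ((τ i).castSucc)))[(t:ℕ)] = g (τ t) := by
        simp [hg]
      rw [hget, ← ofFn_update']
      have h2 := Function.update_comp_equiv g (τ : Fin d ≃ Fin d) (τ t) (a * g (τ t))
      rw [Equiv.symm_apply_apply] at h2
      have h3 : Function.update (fun i => x ((τ i).castSucc)) t (a * g (τ t))
          = fun i => (Function.update g (τ t) (a * g (τ t))) (τ i) := h2.symm
      rw [h3]
    calc ∑ t : Fin d, ∑ τ : Equiv.Perm (Fin d),
          lprod ((List.ofFn (fun i => x ((τ i).castSucc))).insertIdx ((t.castSucc : Fin (d+1)) : ℕ) a)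
        = ∑ t : Fin d, ∑ τ : Equiv.Perm (Fin d),
            lprod (List.ofFn (fun i => (Function.update g (τ t) (a * g (τ t))) (τ i))) := by
          exact Finset.sum_congr rfl fun t _ => Finset.sum_congr rfl fun τ _ => key t τ
      _ = ∑ τ : Equiv.Perm (Fin d), ∑ t : Fin d,
            lprod (List.ofFn (fun i => (Function.update g (τ t) (a * g (τ t))) (τ i))) :=
          Finset.sum_comm
      _ = ∑ τ : Equiv.Perm (Fin d), ∑ s : Fin d,
            lprod (List.ofFn (fun i => (Function.update g s (a * g s)) (τ i))) :=
          Finset.sum_congr rfl fun τ _ =>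
            Equiv.sum_comp τ (fun s => lprod (List.ofFn (fun i =>
              (Function.update g s (a * g s)) (τ i))))
      _ = ∑ s : Fin d, ∑ τ : Equiv.Perm (Fin d),
            lprod (List.ofFn (fun i => (Function.update g s (a * g s)) (τ i))) :=
          Finset.sum_comm
      _ = ∑ s : Fin d, Ssym d (Function.update g s (a * g s)) := rfl

lemma map_lprod {k : Type*} [Field k] (φ : FA k →ₙₐ[k] FA k) :
    ∀ l : List (FA k), φ (lprod l) = lprod (l.map φ)
  | [] => map_zero φ
  | [a] => rfl
  | a :: b :: l => by
    rw [show lprod (a :: b :: l) = a * lprod (b :: l) from rfl, map_mul,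
      map_lprod φ (b :: l)]
    rfl

lemma map_Ssym {k : Type*} [Field k] (φ : FA k →ₙₐ[k] FA k) (d : ℕ) (y : Fin d → FA k) :
    φ (Ssym d y) = Ssym d (fun i => φ (y i)) := by
  simp only [Ssym]
  rw [map_sum]
  refine Finset.sum_congr rfl fun σ _ => ?_
  rw [map_lprod, List.map_ofFn]
  rfl

lemma Ssym_mem_Sn1 {k : Type*} [Field k] (d : ℕ) (y : Fin d → FA k) :
    Ssym d y ∈ Sn k d 1 := by
  classical
  set Y : ℕ → FA k := fun n => if h : n < d then y ⟨n, h⟩ else 0 with hY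
  set φ : FA k →ₙₐ[k] FA k := MonoidAlgebra.liftMagma k (FreeSemigroup.lift Y) with hφ
  have hX : ∀ i : Fin d, φ (Xg k i) = y i := by
    intro i
    show MonoidAlgebra.liftMagma k (FreeSemigroup.lift Y)
      (MonoidAlgebra.single (FreeSemigroup.of (i : ℕ)) 1) = y i
    rw [MonoidAlgebra.liftMagma_apply_apply]
    simp [hY, i.isLt]
  have hmain : φ (Ssym d (fun i : Fin d => Xg k i)) = Ssym d y := by
    rw [map_Ssym]
    congr 1
    funext i
    exact hX i
  have hSn : Sn k d 1 = TSpan k {Ssym d (fun i => Xg k i)} := by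
    rw [Sn]
  rw [hSn]
  exact Submodule.subset_span ⟨φ, Ssym d (fun i => Xg k i), rfl, hmain.symm⟩

/-- Modulo the T-space `S_1^{(d)}`, `S^{(d+1)}(x_1,…,x_{d+1})` is congruent to both
`S^{(d)}(x_1,…,x_d) x_{d+1}` and `x_{d+1} S^{(d)}(x_1,…,x_d)`. -/
theorem Ssym_succ_mod_S1 (k : Type*) [Field k] (d : ℕ) (hd : 1 ≤ d) :
    Ssym (d + 1) (fun j => Xg k j.val) - Ssym d (fun j => Xg k j.val) * Xg k d
        ∈ Sn k d 1 ∧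
    Ssym (d + 1) (fun j => Xg k j.val) - Xg k d * Ssym d (fun j => Xg k j.val)
        ∈ Sn k d 1 := by
  have hA := Ssym_succ_zero d hd (fun j : Fin (d+1) => Xg k j.val)
  have hB := Ssym_succ_last d hd (fun j : Fin (d+1) => Xg k j.val)
  simp only [Fin.coe_castSucc, Fin.val_last] at hA hB
  constructor
  · rw [hB, add_sub_cancel_left]
    exact Submodule.sum_mem _ (fun s _ => Ssym_mem_Sn1 d _)
  · rw [hA, add_sub_cancel_left]
    exact Submodule.sum_mem _ (fun s _ => Ssym_mem_Sn1 d _)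
end

section
/- Let $k$ be a field of prime characteristic $p$ and let $H_1$ be the $T$-space of $k_0\langle X\rangle$ generated by $x_1^p$. Then for every $u \in H_1$ and every $v \in k_0\langle X\rangle$, the commutator $[u,v]$ belongs to $H_1$. -/
open scoped BigOperators

section UnitalKey

variable {k : Type*} [Field k] {B : Type*} [Ring B] [Algebra k B]

/-- number of `true`s. -/
def cntB {n : ℕ} (f : Fin n → Bool) : ℕ := ∑ i, if f i then 1 else 0

/-- ordered word in `x,y` indexed by a boolean vector. -/
def wprod (x y : B) {n : ℕ} (f : Fin n → Bool) : B :=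
  (List.ofFn fun i => if f i then y else x).prod

lemma cntB_cons {n : ℕ} (b : Bool) (f : Fin n → Bool) :
    cntB (Fin.cons b f) = (if b then 1 else 0) + cntB f := by
  unfold cntB
  rw [Fin.sum_univ_succ]
  simp only [Fin.cons_zero, Fin.cons_succ]

lemma cntB_le {n : ℕ} (f : Fin n → Bool) : cntB f ≤ n := by
  have : cntB f ≤ ∑ _i : Fin n, 1 :=
    Finset.sum_le_sum (fun i _ => by split <;> omega)
  simpa using this

lemma wprod_cons (x y : B) {n : ℕ} (b : Bool) (f : Fin n → Bool) :
    wprod x y (Fin.cons b f) = (if b then y else x) * wprod x y f := by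
  simp [wprod, List.ofFn_succ, Fin.cons_zero, Fin.cons_succ]

lemma sum_cons_decomp {n : ℕ} (g : (Fin (n+1) → Bool) → B) :
    ∑ f : Fin (n+1) → Bool, g f
      = ∑ f : Fin n → Bool, (g (Fin.cons false f) + g (Fin.cons true f)) := by
  rw [← Equiv.sum_comp (Fin.consEquiv (fun _ => Bool)) g]
  rw [Fintype.sum_prod_type]
  simp only [Fintype.sum_bool, Fin.consEquiv, Equiv.coe_fn_mk]
  rw [← Finset.sum_add_distrib]
  exact Finset.sum_congr rfl (fun f _ => add_comm _ _)

lemma expand_pow (x y : B) (μ : k) : ∀ n : ℕ,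
    (x + μ • y) ^ n = ∑ f : Fin n → Bool, μ ^ (cntB f) • wprod x y f := by
  intro n
  induction n with
  | zero =>
      rw [pow_zero]
      rw [Fintype.sum_subsingleton _ (fun i : Fin 0 => true)]
      simp [cntB, wprod]
  | succ n ih =>
      rw [pow_succ', ih, sum_cons_decomp
        (fun f => μ ^ (cntB f) • wprod x y f), Finset.sum_add_distrib]
      simp only [cntB_cons, wprod_cons, if_true, if_false, Bool.false_eq_true, zero_add]
      rw [add_mul, Finset.mul_sum, Finset.mul_sum]
      congr 1
      · exact Finset.sum_congr rfl (fun f _ => (mul_smul_comm _ _ _))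
      · refine Finset.sum_congr rfl (fun f _ => ?_)
        rw [smul_mul_assoc, mul_smul_comm, smul_smul, pow_add, pow_one]

lemma sumZ (x y : B) : ∀ n : ℕ,
    ∑ f : Fin n → Bool, (if cntB f = 0 then (1:k) else 0) • wprod x y f = x ^ n := by
  intro n
  induction n with
  | zero =>
      rw [Fintype.sum_subsingleton _ (fun i : Fin 0 => true)]
      simp [cntB, wprod]
  | succ n ih =>
      rw [sum_cons_decomp, Finset.sum_add_distrib]
      simp only [cntB_cons, wprod_cons, if_true, if_false, Bool.false_eq_true, zero_add]
      have h1 : ∀ f : Fin n → Bool,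
          (if 1 + cntB f = 0 then (1:k) else 0) • (y * wprod x y f) = 0 := by
        intro f; rw [if_neg (by omega), zero_smul]
      rw [Finset.sum_congr rfl (fun f _ => h1 f), Finset.sum_const, smul_zero, add_zero]
      rw [pow_succ', ← ih, Finset.mul_sum]
      exact Finset.sum_congr rfl (fun f _ => (mul_smul_comm _ _ _).symm)

lemma sumP (x y : B) : ∀ n : ℕ,
    ∑ f : Fin n → Bool, (if cntB f = n then (1:k) else 0) • wprod x y f = y ^ n := by
  intro n
  induction n with
  | zero =>
      rw [Fintype.sum_subsingleton _ (fun i : Fin 0 => true)]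
      simp [cntB, wprod]
  | succ n ih =>
      rw [sum_cons_decomp, Finset.sum_add_distrib]
      simp only [cntB_cons, wprod_cons, if_true, if_false, Bool.false_eq_true, zero_add]
      have h1 : ∀ f : Fin n → Bool,
          (if cntB f = n + 1 then (1:k) else 0) • (x * wprod x y f) = 0 := by
        intro f; rw [if_neg (by have := cntB_le f; omega), zero_smul]
      rw [Finset.sum_congr rfl (fun f _ => h1 f), Finset.sum_const, smul_zero, zero_add]
      have h2 : ∀ f : Fin n → Bool,
          (if 1 + cntB f = n + 1 then (1:k) else 0) • (y * wprod x y f)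
            = y * ((if cntB f = n then (1:k) else 0) • wprod x y f) := by
        intro f
        rw [if_congr (show (1 + cntB f = n + 1) ↔ (cntB f = n) by omega) rfl rfl,
          mul_smul_comm]
      rw [Finset.sum_congr rfl (fun f _ => h2 f), ← Finset.mul_sum, ih, pow_succ']

lemma sumA (x y : B) : ∀ n : ℕ,
    ∑ f : Fin n → Bool, (if cntB f = 1 then (1:k) else 0) • wprod x y f
      = ∑ i ∈ Finset.range n, x ^ i * y * x ^ (n - 1 - i) := by
  intro n
  induction n with
  | zero =>
      rw [Fintype.sum_subsingleton _ (fun i : Fin 0 => true)]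
      simp [cntB, wprod]
  | succ n ih =>
      rw [sum_cons_decomp, Finset.sum_add_distrib]
      simp only [cntB_cons, wprod_cons, if_true, if_false, Bool.false_eq_true, zero_add]
      have h2 : ∀ f : Fin n → Bool,
          (if 1 + cntB f = 1 then (1:k) else 0) • (y * wprod x y f)
            = y * ((if cntB f = 0 then (1:k) else 0) • wprod x y f) := by
        intro f
        rw [if_congr (show (1 + cntB f = 1) ↔ (cntB f = 0) by omega) rfl rfl,
          mul_smul_comm]
      have h1 : ∀ f : Fin n → Bool,
          (if cntB f = 1 then (1:k) else 0) • (x * wprod x y f)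
            = x * ((if cntB f = 1 then (1:k) else 0) • wprod x y f) := by
        intro f; rw [mul_smul_comm]
      rw [Finset.sum_congr rfl (fun f _ => h1 f), ← Finset.mul_sum, ih]
      rw [Finset.sum_congr rfl (fun f _ => h2 f), ← Finset.mul_sum, sumZ]
      rw [Finset.sum_range_succ']
      have e0 : x ^ 0 * y * x ^ (n + 1 - 1 - 0) = y * x ^ n := by
        rw [pow_zero, one_mul]; norm_num
      rw [e0, Finset.mul_sum]
      congr 1
      refine Finset.sum_congr rfl (fun i hi => ?_)
      rw [Finset.mem_range] at hi
      have e1 : n + 1 - 1 - (i + 1) = n - 1 - i := by omega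
      have e2 : x ^ (i+1) = x * x ^ i := by rw [pow_succ']
      rw [e1, e2, mul_assoc, mul_assoc, mul_assoc]

lemma tele (x w : B) : ∀ n : ℕ,
    ∑ i ∈ Finset.range n, x ^ i * (x * w - w * x) * x ^ (n - 1 - i)
      = x ^ n * w - w * x ^ n := by
  intro n
  induction n with
  | zero => simp
  | succ n ih =>
      rw [Finset.sum_range_succ]
      have e1 : ∀ i ∈ Finset.range n,
          x ^ i * (x * w - w * x) * x ^ (n + 1 - 1 - i)
            = (x ^ i * (x * w - w * x) * x ^ (n - 1 - i)) * x := by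
        intro i hi
        rw [Finset.mem_range] at hi
        have : n + 1 - 1 - i = (n - 1 - i) + 1 := by omega
        rw [this, pow_succ, ← mul_assoc]
      rw [Finset.sum_congr rfl e1, ← Finset.sum_mul, ih]
      have : n + 1 - 1 - n = 0 := by omega
      rw [this, pow_zero, mul_one, pow_succ]
      noncomm_ring

lemma zmod_sum_pow (p : ℕ) [Fact p.Prime] (s : ℕ) :
    ∑ z : ZMod p, z ^ s = if s ≠ 0 ∧ (p - 1) ∣ s then -1 else 0 := by
  classical
  rcases Nat.eq_zero_or_pos s with hs | hs
  · subst hs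
    simp only [pow_zero, Finset.sum_const, Finset.card_univ, smul_eq_mul, mul_one]
    rw [if_neg (by simp), nsmul_eq_mul, mul_one, ZMod.card, ZMod.natCast_self]
  · have hs' : s ≠ 0 := hs.ne'
    have key : ∑ z : ZMod p, z ^ s = ∑ u : (ZMod p)ˣ, (u : ZMod p) ^ s := by
      let φ : (ZMod p)ˣ ↪ ZMod p := ⟨fun u => u, fun _ _ => Units.ext⟩
      have himg : Finset.univ.map φ = Finset.univ \ {0} := by
        ext z
        simp only [Finset.mem_map, Finset.mem_univ, Function.Embedding.coeFn_mk,
          true_and, Finset.mem_sdiff, Finset.mem_singleton, φ]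
        exact (isUnit_iff_ne_zero : (∃ a : (ZMod p)ˣ, (a : ZMod p) = z) ↔ ¬z = 0)
      calc ∑ z : ZMod p, z ^ s
          = ∑ z ∈ Finset.univ \ {(0 : ZMod p)}, z ^ s := by
            rw [← Finset.sum_sdiff (Finset.subset_univ {(0 : ZMod p)}),
              Finset.sum_singleton, zero_pow hs', add_zero]
        _ = ∑ u : (ZMod p)ˣ, (u : ZMod p) ^ s := by
            rw [← himg, Finset.sum_map]
            exact Finset.sum_congr rfl (fun u _ => rfl)
    rw [key]
    have := FiniteField.sum_pow_units (ZMod p) s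
    rw [ZMod.card] at this
    rw [this]
    simp [hs']

lemma coeff_val (p : ℕ) (hp : p.Prime) (j : ℕ) (hj : j ≤ p) :
    (if p - 2 + j ≠ 0 ∧ (p - 1) ∣ (p - 2 + j) then (-1 : k) else 0)
      = (if j = 1 then (-1:k) else 0) + (if j = p then (-1:k) else 0) := by
  have hp2 : 2 ≤ p := hp.two_le
  by_cases h1 : j = 1
  · subst h1
    rw [if_pos ⟨by omega, ⟨1, by omega⟩⟩, if_pos rfl, if_neg (by omega), add_zero]
  · by_cases h2 : j = p
    · subst h2
      rw [if_pos ⟨by omega, ⟨2, by omega⟩⟩, if_neg h1, if_pos rfl, zero_add]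
    · rw [if_neg h1, if_neg h2, add_zero, if_neg]
      rintro ⟨hne, m, hm⟩
      rcases Nat.lt_or_ge m 3 with hm3 | hm3
      · interval_cases m <;> omega
      · have : (p - 1) * 3 ≤ (p - 1) * m := Nat.mul_le_mul_left _ hm3
        omega

lemma master (p : ℕ) (hp : p.Prime) [NeZero p] [CharP k p] (x w : B) :
    ∑ z : ZMod p, ((ZMod.castHom (dvd_refl p) k) z) ^ (p - 2) •
        (x + ((ZMod.castHom (dvd_refl p) k) z) • (x * w - w * x)) ^ p
      = -(x ^ p * w - w * x ^ p) - (x * w - w * x) ^ p := by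
  haveI : Fact p.Prime := ⟨hp⟩
  set y := x * w - w * x with hy
  set ρ := (ZMod.castHom (dvd_refl p) k) with hρ
  have step1 : ∀ z : ZMod p,
      (ρ z) ^ (p - 2) • (x + (ρ z) • y) ^ p
        = ∑ f : Fin p → Bool, (ρ z) ^ (p - 2 + cntB f) • wprod x y f := by
    intro z
    rw [expand_pow x y (ρ z) p, Finset.smul_sum]
    exact Finset.sum_congr rfl (fun f _ => by rw [smul_smul, ← pow_add])
  rw [Finset.sum_congr rfl (fun z _ => step1 z), Finset.sum_comm]
  have step2 : ∀ f : Fin p → Bool,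
      ∑ z : ZMod p, (ρ z) ^ (p - 2 + cntB f) • wprod x y f
        = ((if cntB f = 1 then (-1:k) else 0) + (if cntB f = p then (-1:k) else 0))
            • wprod x y f := by
    intro f
    rw [← Finset.sum_smul]
    congr 1
    have : ∑ z : ZMod p, (ρ z) ^ (p - 2 + cntB f)
        = ρ (∑ z : ZMod p, z ^ (p - 2 + cntB f)) := by
      rw [map_sum]
      exact Finset.sum_congr rfl (fun z _ => (map_pow ρ z _).symm)
    rw [this, zmod_sum_pow p (p - 2 + cntB f)]
    rw [← coeff_val p hp (cntB f) (cntB_le f)]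
    split
    · rw [map_neg, map_one]
    · rw [map_zero]
  rw [Finset.sum_congr rfl (fun f _ => step2 f)]
  have step3 : ∀ f : Fin p → Bool,
      ((if cntB f = 1 then (-1:k) else 0) + (if cntB f = p then (-1:k) else 0))
          • wprod x y f
        = -((if cntB f = 1 then (1:k) else 0) • wprod x y f)
          + -((if cntB f = p then (1:k) else 0) • wprod x y f) := by
    intro f
    rw [add_smul, ← neg_smul, ← neg_smul]
    congr 2 <;> split <;> norm_num
  rw [Finset.sum_congr rfl (fun f _ => step3 f), Finset.sum_add_distrib,
    Finset.sum_neg_distrib, Finset.sum_neg_distrib, sumA, sumP, tele]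
  abel

end UnitalKey


section Nonunital

variable {k : Type*} [Field k]

lemma npow'_one {A : Type*} [NonUnitalSemiring A] (a : A) : npow' a 1 = a := rfl

lemma npow'_succ {A : Type*} [NonUnitalSemiring A] (a : A) (n : ℕ) :
    npow' a (n + 2) = a * npow' a (n + 1) := rfl

lemma map_npow' {A A' : Type*} [NonUnitalSemiring A] [NonUnitalSemiring A']
    [Module k A] [Module k A'] (φ : A →ₙₐ[k] A') (a : A) :
    ∀ n : ℕ, φ (npow' a (n + 1)) = npow' (φ a) (n + 1) := by
  intro n
  induction n with
  | zero => rw [npow'_one, npow'_one]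
  | succ n ih => rw [npow'_succ, map_mul, ih, npow'_succ]

lemma hom_npow'_pow {A B : Type*} [NonUnitalSemiring A] [Module k A]
    [Ring B] [Algebra k B] (φ : A →ₙₐ[k] B) (a : A) :
    ∀ n : ℕ, φ (npow' a (n + 1)) = (φ a) ^ (n + 1) := by
  intro n
  induction n with
  | zero => rw [npow'_one, pow_one]
  | succ n ih => rw [npow'_succ, map_mul, ih, ← pow_succ']

lemma key_identity {A : Type*} [NonUnitalRing A] [Module k A]
    [IsScalarTower k A A] [SMulCommClass k A A]
    (p : ℕ) (hp : p.Prime) [NeZero p] [CharP k p] (a v : A) :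
    npow' a p * v - v * npow' a p
      = -(npow' (a * v - v * a) p)
        - ∑ z : ZMod p, ((ZMod.castHom (dvd_refl p) k) z) ^ (p - 2) •
            npow' (a + ((ZMod.castHom (dvd_refl p) k) z) • (a * v - v * a)) p := by
  obtain ⟨q, rfl⟩ : ∃ q, p = q + 1 := ⟨p - 1, by have := hp.two_le; omega⟩
  apply Unitization.inr_injective (R := k)
  have hinr : ∀ b : A, (b : Unitization k A) = Unitization.inrNonUnitalAlgHom k A b :=
    fun _ => rfl
  simp only [hinr, map_sub, map_neg, map_mul, map_smul, map_sum, map_add,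
    hom_npow'_pow]
  rw [master (q + 1) hp]
  abel

lemma Hn_one_eq (p : ℕ) : Hn k p 1 = TSpan k {npow' (Xg k 0) p} := by unfold Hn; rfl

lemma gen_mem (p : ℕ) (hp : p ≠ 0) (b : FA k) : npow' b p ∈ Hn k p 1 := by
  obtain ⟨q, rfl⟩ : ∃ q, p = q + 1 := ⟨p - 1, by omega⟩
  rw [Hn_one_eq]
  apply Submodule.subset_span
  have hXg : (MonoidAlgebra.liftMagma k (FreeSemigroup.lift fun _ : ℕ => b))
      (Xg k 0) = b := by
    show (MonoidAlgebra.liftMagma k (FreeSemigroup.lift fun _ : ℕ => b))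
        (MonoidAlgebra.single (FreeSemigroup.of 0) 1) = b
    rw [MonoidAlgebra.liftMagma_apply_apply]
    simp
  exact ⟨MonoidAlgebra.liftMagma k (FreeSemigroup.lift fun _ : ℕ => b),
    npow' (Xg k 0) (q + 1), rfl, by rw [map_npow', hXg]⟩

end Nonunital

/-- The T-space `H_1` generated by `x_1^p` is closed under commutators. -/
theorem H1_closed_under_commutator (k : Type*) [Field k] (p : ℕ) (hp : p.Prime)
    [CharP k p] :
    ∀ u ∈ Hn k p 1, ∀ v : FA k, u * v - v * u ∈ Hn k p 1 := by
  intro u hu v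
  have hH := Hn_one_eq (k := k) p
  rw [hH] at hu
  unfold TSpan at hu
  induction hu using Submodule.span_induction with
  | mem a ha =>
      obtain ⟨φ, s, hs, rfl⟩ := ha
      rw [Set.mem_singleton_iff] at hs
      subst hs
      obtain ⟨q, hq⟩ : ∃ q, p = q + 1 := ⟨p - 1, by have := hp.two_le; omega⟩
      subst hq
      haveI : NeZero (q + 1) := ⟨by omega⟩
      rw [map_npow']
      rw [key_identity (k := k) (q + 1) hp (φ (Xg k 0)) v]
      apply Submodule.sub_mem
      · exact Submodule.neg_mem _ (gen_mem _ (by omega) _)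
      · exact Submodule.sum_mem _
          (fun z _ => Submodule.smul_mem _ _ (gen_mem _ (by omega) _))
  | zero => simp
  | add x y hx hy ihx ihy =>
      have h : (x + y) * v - v * (x + y) = (x * v - v * x) + (y * v - v * y) := by
        rw [add_mul, mul_add]; abel
      rw [h]; exact Submodule.add_mem _ ihx ihy
  | smul r x hx ih =>
      have h : (r • x) * v - v * (r • x) = r • (x * v - v * x) := by
        rw [smul_mul_assoc, mul_smul_comm, smul_sub]
      rw [h]; exact Submodule.smul_mem _ _ ih
end

section
/- Let $k$ be a field of prime characteristic $p$. Define $T$-spaces $H_n$ of $k_0\langle X\rangle$ by $H_1 = \{x_1^p\}^S$ and $H_{n+1} = (H_n H_1)^S$. Then for all $m, n \geq 1$, $(H_m H_n)^S = H_{m+n}$. -/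
open scoped BigOperators

section Aux

variable {k : Type*} [Field k]

lemma mem_TSpan_of_mem {S : Set (FA k)} {a : FA k} (ha : a ∈ S) : a ∈ TSpan k S :=
  Submodule.subset_span ⟨NonUnitalAlgHom.id k (FA k), a, ha, rfl⟩

lemma isTSpace_TSpan (S : Set (FA k)) : IsTSpace k (TSpan k S) := by
  intro φ v hv
  have : TSpan k S ≤ Submodule.comap (φ : FA k →ₗ[k] FA k) (TSpan k S) := by
    apply Submodule.span_le.mpr
    rintro a ⟨ψ, s, hs, rfl⟩
    exact Submodule.subset_span ⟨φ.comp ψ, s, hs, rfl⟩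
  exact this hv

lemma isTSpace_Hn (p n : ℕ) : IsTSpace k (Hn k p n) := by
  match n with
  | 0 =>
    intro φ v hv
    simp only [Hn, Submodule.mem_bot] at hv ⊢
    rw [hv]; exact map_zero φ
  | 1 =>
    rw [show Hn k p 1 = TSpan k {npow' (Xg k 0) p} from by rw [Hn]]
    exact isTSpace_TSpan _
  | (n+2) => rw [Hn.eq_3]; exact isTSpace_TSpan _

/-- The span of the set of products. -/
noncomputable def Pmul (U V : Submodule k (FA k)) : Submodule k (FA k) :=
  Submodule.span k (mulSet U V)

lemma TSpan_mulSet_eq {U V : Submodule k (FA k)} (hU : IsTSpace k U)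
    (hV : IsTSpace k V) : TSpan k (mulSet U V) = Pmul U V := by
  apply le_antisymm
  · apply Submodule.span_le.mpr
    rintro a ⟨φ, s, ⟨u, hu, v, hv, rfl⟩, rfl⟩
    exact Submodule.subset_span ⟨φ u, hU φ u hu, φ v, hV φ v hv, by rw [map_mul]⟩
  · exact Submodule.span_le.mpr fun a ha => mem_TSpan_of_mem ha

lemma mul_mem_Pmul {U V : Submodule k (FA k)} {u v : FA k} (hu : u ∈ U) (hv : v ∈ V) :
    u * v ∈ Pmul U V :=
  Submodule.subset_span ⟨u, hu, v, hv, rfl⟩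

lemma Pmul_assoc (U V W : Submodule k (FA k)) : Pmul (Pmul U V) W = Pmul U (Pmul V W) := by
  apply le_antisymm
  · apply Submodule.span_le.mpr
    rintro a ⟨b, hb, w, hw, rfl⟩
    induction hb using Submodule.span_induction with
    | mem x hx =>
      obtain ⟨u, hu, v, hv, rfl⟩ := hx
      rw [mul_assoc]
      exact mul_mem_Pmul hu (mul_mem_Pmul hv hw)
    | zero => simp only [zero_mul]; exact Submodule.zero_mem _
    | add x y _ _ hx hy => rw [add_mul]; exact Submodule.add_mem _ hx hy
    | smul c x _ hx => rw [smul_mul_assoc]; exact Submodule.smul_mem _ c hx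
  · apply Submodule.span_le.mpr
    rintro a ⟨u, hu, b, hb, rfl⟩
    induction hb using Submodule.span_induction with
    | mem x hx =>
      obtain ⟨v, hv, w, hw, rfl⟩ := hx
      rw [← mul_assoc]
      exact mul_mem_Pmul (mul_mem_Pmul hu hv) hw
    | zero => simp only [mul_zero]; exact Submodule.zero_mem _
    | add x y _ _ hx hy => rw [mul_add]; exact Submodule.add_mem _ hx hy
    | smul c x _ hx => rw [mul_smul_comm]; exact Submodule.smul_mem _ c hx

lemma Pmul_Hn_one (p : ℕ) (m : ℕ) (hm : 1 ≤ m) :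
    Pmul (Hn k p m) (Hn k p 1) = Hn k p (m + 1) := by
  obtain ⟨l, rfl⟩ := Nat.exists_eq_add_of_le' hm
  exact ((Hn.eq_3 k p l).trans (TSpan_mulSet_eq (isTSpace_Hn p _) (isTSpace_Hn p _))).symm

end Aux

/-- `(H_m H_n)^S = H_{m+n}` for all `m, n ≥ 1`. -/
theorem Hn_mul (k : Type*) [Field k] (p : ℕ) (hp : p.Prime) [CharP k p] :
    ∀ m n : ℕ, 1 ≤ m → 1 ≤ n →
      TSpan k (mulSet (Hn k p m) (Hn k p n)) = Hn k p (m + n) := by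
  have key : ∀ n m : ℕ, 1 ≤ m → 1 ≤ n → Pmul (Hn k p m) (Hn k p n) = Hn k p (m + n) := by
    intro n
    induction n using Nat.strong_induction_on with
    | _ n ih =>
      match n with
      | 0 => intro m _ h; omega
      | 1 => intro m hm _; exact Pmul_Hn_one p m hm
      | (j+2) =>
        intro m hm _
        have h1 : Hn k p (j+2) = Pmul (Hn k p (j+1)) (Hn k p 1) :=
          (Pmul_Hn_one p (j+1) (by omega)).symm
        rw [h1, ← Pmul_assoc, ih (j+1) (by omega) m hm (by omega),
          show m + (j+2) = m + (j+1) + 1 from by omega]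
        exact Pmul_Hn_one p (m + (j+1)) (by omega)
  intro m n hm hn
  rw [TSpan_mulSet_eq (isTSpace_Hn p m) (isTSpace_Hn p n)]
  exact key n m hm hn
end
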